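/- Let n ≥ 1 and f₀ ∈ L¹(ℝ) with ∫_ℝ (1+z²)^{(n+1)/2} |f₀(z)| dz < ∞, satisfying ∫_ℝ z^k f₀(z) dz = 0 for all 0 ≤ k < n. Then for every 0 ≤ i ≤ n and every ζ ∈ ℝ, the i-th derivative of the Fourier transform of f₀ satisfies |∂_ζ^i f̂₀(ζ)| ≤ C |ζ|^{n−i} ‖z^n f₀(z)‖_{L¹}, for a constant C depending only on n. -/

import Mathlib

open MeasureTheory

noncomputable section

open Complex Finset intervalIntegral Real FourierTransform
open Complex Finset intervalIntegral

lemma expTaylor_nonneg (m : ℕ) : ∀ t : ℝ, 0 ≤ t →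
    ‖Complex.exp (↑t * I) - ∑ k ∈ Finset.range m, (↑t * I) ^ k / (Nat.factorial k)‖ ≤ t ^ m / (Nat.factorial m) := by
  induction m with
  | zero =>
    intro t ht
    simp [Complex.norm_exp]
  | succ m ih =>
    intro t ht
    set F : ℝ → ℂ := fun s => Complex.exp (↑s * I) - ∑ k ∈ Finset.range (m + 1), (↑s * I) ^ k / (Nat.factorial k)
      with hFdef
    set F' : ℝ → ℂ := fun s => I * (Complex.exp (↑s * I) - ∑ k ∈ Finset.range m, (↑s * I) ^ k / (Nat.factorial k))
      with hF'def
    have hlin : ∀ s : ℝ, HasDerivAt (fun u : ℝ => (↑u * I : ℂ)) I s := by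
      intro s
      simpa using (Complex.ofRealCLM.hasDerivAt (x := s)).mul_const I
    have hF : ∀ s : ℝ, HasDerivAt F (F' s) s := by
      intro s
      have hexp : HasDerivAt (fun u : ℝ => Complex.exp (↑u * I)) (Complex.exp (↑s * I) * I) s :=
        (hlin s).cexp
      have hsum : HasDerivAt (fun u : ℝ => ∑ k ∈ Finset.range (m + 1), (↑u * I) ^ k / (Nat.factorial k))
          (∑ k ∈ Finset.range (m + 1), (k : ℂ) * (↑s * I) ^ (k - 1) * I / (Nat.factorial k)) s := by
        apply HasDerivAt.fun_sum
        intro k _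
        have hp : HasDerivAt (fun z : ℂ => z ^ k) ((k : ℂ) * (↑s * I) ^ (k - 1)) (↑s * I) :=
          hasDerivAt_pow k _
        have := HasDerivAt.scomp (g₁ := fun z : ℂ => z ^ k)
          (h := fun u : ℝ => (↑u * I : ℂ)) (x := s) hp (hlin s)
        have h2 := this.div_const ((Nat.factorial k : ℂ))
        rw [show (k : ℂ) * (↑s * I) ^ (k - 1) * I / (Nat.factorial k)
            = I • ((k : ℂ) * (↑s * I) ^ (k - 1)) / (Nat.factorial k) by rw [smul_eq_mul]; ring]
        exact h2
      have heq : (∑ k ∈ Finset.range (m + 1), (k : ℂ) * (↑s * I) ^ (k - 1) * I / (Nat.factorial k))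
          = I * ∑ k ∈ Finset.range m, (↑s * I) ^ k / (Nat.factorial k) := by
        rw [Finset.sum_range_succ']
        simp only [Nat.cast_zero, Nat.factorial_zero, Nat.cast_one, pow_zero, zero_mul,
          Nat.zero_sub, div_one, add_zero, Nat.add_sub_cancel]
        rw [Finset.mul_sum]
        congr 1
        ext k
        have : (Nat.factorial (k+1) : ℂ) = (k + 1) * (Nat.factorial k) := by
          push_cast [Nat.factorial_succ]; ring
        rw [this]
        have hk1 : ((k : ℂ) + 1) ≠ 0 := by
          exact_mod_cast (Nat.cast_add_one_ne_zero k : ((k:ℂ)+1) ≠ 0)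
        have hkf : (((Nat.factorial k) : ℂ)) ≠ 0 := by exact_mod_cast Nat.cast_ne_zero.mpr k.factorial_ne_zero
        push_cast
        field_simp
      have := hexp.sub hsum
      rw [heq] at this
      have e : F' s = Complex.exp (↑s * I) * I - I * ∑ k ∈ Finset.range m, (↑s * I) ^ k / (Nat.factorial k) := by
        rw [hF'def]
        ring
      rw [e]
      exact this
    have hF'cont : Continuous F' := by
      apply Continuous.mul continuous_const
      apply Continuous.sub
      · exact Complex.continuous_exp.comp ((Complex.continuous_ofReal).mul continuous_const)
      · apply continuous_finset_sum
        intro k _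
        exact (((Complex.continuous_ofReal).mul continuous_const).pow k).div_const _
    have hFTC : ∫ s in (0:ℝ)..t, F' s = F t - F 0 :=
      intervalIntegral.integral_eq_sub_of_hasDerivAt (fun s _ => hF s)
        (hF'cont.intervalIntegrable _ _)
    have hF0 : F 0 = 0 := by
      simp only [hFdef, Complex.ofReal_zero, zero_mul, Complex.exp_zero]
      rw [Finset.sum_range_succ']
      simp
    have hFt : F t = ∫ s in (0:ℝ)..t, F' s := by rw [hFTC, hF0, sub_zero]
    calc ‖F t‖ = ‖∫ s in (0:ℝ)..t, F' s‖ := by rw [hFt]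
      _ ≤ ∫ s in (0:ℝ)..t, ‖F' s‖ := intervalIntegral.norm_integral_le_integral_norm ht
      _ ≤ ∫ s in (0:ℝ)..t, s ^ m / (Nat.factorial m) := by
          apply intervalIntegral.integral_mono_on ht
          · exact (hF'cont.norm.intervalIntegrable _ _)
          · exact ((continuous_pow m).div_const _).intervalIntegrable _ _
          · intro s hs
            have hs0 : 0 ≤ s := hs.1
            have := ih s hs0
            calc ‖F' s‖ = ‖Complex.exp (↑s * I) - ∑ k ∈ Finset.range m, (↑s * I) ^ k / (Nat.factorial k)‖ := by
                  rw [hF'def]; simp [norm_mul]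
              _ ≤ s ^ m / (Nat.factorial m) := this
      _ = t ^ (m + 1) / (Nat.factorial (m+1)) := by
          rw [intervalIntegral.integral_div, integral_pow]
          rw [Nat.factorial_succ]
          push_cast
          field_simp
          try ring

lemma expTaylor (m : ℕ) (t : ℝ) :
    ‖Complex.exp (↑t * I) - ∑ k ∈ Finset.range m, (↑t * I) ^ k / (Nat.factorial k)‖ ≤ |t| ^ m / (Nat.factorial m) := by
  rcases le_or_gt 0 t with ht | ht
  · rw [_root_.abs_of_nonneg ht]; exact expTaylor_nonneg m t ht
  · have hs : 0 ≤ -t := by linarith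
    have hconj : Complex.exp (↑t * I) - ∑ k ∈ Finset.range m, (↑t * I) ^ k / (Nat.factorial k)
        = (starRingEnd ℂ) (Complex.exp (↑(-t) * I) - ∑ k ∈ Finset.range m, (↑(-t) * I) ^ k / (Nat.factorial k)) := by
      rw [map_sub, map_sum, ← Complex.exp_conj]
      congr 1
      · congr 1
        simp [Complex.conj_ofReal]
      · apply Finset.sum_congr rfl
        intro k _
        rw [map_div₀, map_pow, map_mul]
        simp [Complex.conj_ofReal]
    rw [hconj, RCLike.norm_conj, ← abs_neg t, _root_.abs_of_nonneg hs]
    exact expTaylor_nonneg m (-t) hs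


/-- The Fourier transform `f̂₀(ζ) = ∫ f₀(z) e^{-iζz} dz`. -/
def fourierHat (f : ℝ → ℝ) (ζ : ℝ) : ℂ :=
  ∫ z : ℝ, (f z : ℂ) * Complex.exp (-Complex.I * ζ * z)

/-- If `f₀ ∈ L¹` with weight `(1+z²)^{(n+1)/2}` and its first `n` moments vanish, then
`|∂_ζ^i f̂₀(ζ)| ≤ C |ζ|^{n-i} ‖z^n f₀‖_{L¹}` for `0 ≤ i ≤ n`, with `C = C(n)`. -/
theorem fourier_derivative_moment_bound (n : ℕ) (hn : 1 ≤ n) :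
    ∃ C > 0, ∀ f₀ : ℝ → ℝ,
      Integrable f₀ →
      Integrable (fun z => (1 + z ^ 2) ^ (((n : ℝ) + 1) / 2) * |f₀ z|) →
      (∀ k < n, ∫ z : ℝ, z ^ k * f₀ z = 0) →
      ∀ i ≤ n, ∀ ζ : ℝ,
        ‖iteratedDeriv i (fourierHat f₀) ζ‖ ≤
          C * |ζ| ^ (n - i) * ∫ z : ℝ, |z ^ n * f₀ z| := by
  refine ⟨1, one_pos, ?_⟩
  intro f₀ hf₀ hw hmom i hi ζ
  set f : ℝ → ℂ := fun z => (f₀ z : ℂ) with hfdef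
  have hπ : (2 * π) ≠ 0 := by positivity
  have hπC : ((π : ℂ)) ≠ 0 := Complex.ofReal_ne_zero.mpr Real.pi_ne_zero
  -- integrability of |v|^k * |f₀ v| for k ≤ n
  have habs : ∀ k : ℕ, k ≤ n → Integrable (fun v : ℝ => |v| ^ k * |f₀ v|) := by
    intro k hk
    refine hw.mono' ?_ ?_
    · exact ((_root_.continuous_abs.pow k).aestronglyMeasurable.mul hf₀.1.norm)
    · filter_upwards with v
      have h1 : |v| ≤ (1 + v ^ 2) ^ ((1 : ℝ)/2) := by
        rw [← Real.sqrt_eq_rpow, ← Real.sqrt_sq_eq_abs]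
        exact Real.sqrt_le_sqrt (by nlinarith)
      have h2 : |v| ^ k ≤ (1 + v ^ 2) ^ (((n : ℝ) + 1) / 2) := by
        calc |v| ^ k ≤ ((1 + v ^ 2) ^ ((1:ℝ)/2)) ^ k :=
              pow_le_pow_left₀ (abs_nonneg v) h1 k
          _ = (1 + v ^ 2) ^ ((k : ℝ)/2) := by
              rw [← Real.rpow_natCast ((1 + v ^ 2) ^ ((1:ℝ)/2)) k, ← Real.rpow_mul (by positivity)]
              congr 1
              ring
          _ ≤ (1 + v ^ 2) ^ (((n : ℝ) + 1) / 2) := by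
              apply Real.rpow_le_rpow_of_exponent_le (by nlinarith)
              have : (k : ℝ) ≤ (n : ℝ) := by exact_mod_cast hk
              linarith
      have hnn : (0:ℝ) ≤ |v| ^ k * |f₀ v| := by positivity
      rw [Real.norm_eq_abs, _root_.abs_of_nonneg hnn]
      exact mul_le_mul_of_nonneg_right h2 (abs_nonneg _)
  have hms : AEStronglyMeasurable f volume :=
    Complex.continuous_ofReal.comp_aestronglyMeasurable hf₀.1
  -- complex integrability
  have hIntC : ∀ j : ℕ, j ≤ n → Integrable (fun x : ℝ => (x : ℂ) ^ j * (f₀ x : ℂ)) := by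
    intro j hj
    refine (habs j hj).mono' ?_ ?_
    · exact ((Complex.continuous_ofReal.pow j).aestronglyMeasurable.mul hms)
    · filter_upwards with x
      simp only [norm_mul, norm_pow, Complex.norm_real, Real.norm_eq_abs]
      exact le_rfl
  have hpowC : ∀ j : ℕ, (j : ℕ∞) ≤ (i : ℕ∞) → Integrable (fun x : ℝ => x ^ j • f x) := by
    intro j hj
    have hj' : j ≤ n := le_trans (Nat.cast_le.mp hj) hi
    refine (habs j hj').mono' ?_ ?_
    · exact ((continuous_pow j).aestronglyMeasurable.smul hms)
    · filter_upwards with x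
      simp [hfdef, norm_smul, abs_pow, Real.norm_eq_abs]
  have hcd : ContDiff ℝ (i : ℕ∞) (𝓕 f) := by
    apply Real.contDiff_fourier
    intro j hj
    have hj' : j ≤ n := le_trans (Nat.cast_le.mp hj) hi
    have := habs j hj'
    simpa [hfdef, Real.norm_eq_abs, Complex.norm_real] using this
  -- step 1: fourierHat as rescaled Fourier integral
  have h1 : fourierHat f₀ = fun ξ => 𝓕 f ((2 * π)⁻¹ * ξ) := by
    funext ξ
    rw [fourierHat, Real.fourier_real_eq_integral_exp_smul]
    refine MeasureTheory.integral_congr_ae (Filter.Eventually.of_forall fun v => ?_)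
    have harg : ((-2 * π * v * ((2 * π)⁻¹ * ξ) : ℝ) : ℂ) * Complex.I
        = -Complex.I * ξ * v := by
      have : (-2 * π * v * ((2 * π)⁻¹ * ξ) : ℝ) = -(v * ξ) := by field_simp
      rw [this]; push_cast; ring
    show (f₀ v : ℂ) * Complex.exp (-Complex.I * ξ * v)
        = Complex.exp (((-2 * π * v * ((2 * π)⁻¹ * ξ) : ℝ) : ℂ) * Complex.I) • f v
    simp only [hfdef]
    rw [harg, smul_eq_mul, mul_comm]
  -- step 2: iterated derivative of rescaled function
  have h2 : iteratedDeriv i (fourierHat f₀) ζ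
      = ((2 * π)⁻¹ : ℝ) ^ i • iteratedDeriv i (𝓕 f) ((2 * π)⁻¹ * ζ) := by
    rw [h1]
    have := iteratedDeriv_comp_const_smul (n := i) (f := 𝓕 f)
      (hcd.of_le le_rfl) ((2 * π)⁻¹)
    exact congrFun this ζ
  -- step 3: mathlib's formula for iterated derivative of Fourier integral
  have h3 : iteratedDeriv i (𝓕 f)
      = 𝓕 (fun x : ℝ => (-2 * π * Complex.I * x) ^ i • f x) :=
    Real.iteratedDeriv_fourier (N := (i : ℕ∞)) hpowC le_rfl
  -- key identity
  have key : iteratedDeriv i (fourierHat f₀) ζ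
      = ∫ x : ℝ, (-(Complex.I * x)) ^ i * ((f₀ x : ℂ) * Complex.exp (-Complex.I * ζ * x)) := by
    rw [h2, h3, Real.fourier_real_eq_integral_exp_smul, ← MeasureTheory.integral_smul]
    refine MeasureTheory.integral_congr_ae (Filter.Eventually.of_forall fun x => ?_)
    have harg : ((-2 * π * x * ((2 * π)⁻¹ * ζ) : ℝ) : ℂ) * Complex.I
        = -Complex.I * ζ * x := by
      have : (-2 * π * x * ((2 * π)⁻¹ * ζ) : ℝ) = -(x * ζ) := by field_simp
      rw [this]; push_cast; ring
    show ((2 * π)⁻¹ : ℝ) ^ i • (Complex.exp (((-2 * π * x * ((2 * π)⁻¹ * ζ) : ℝ) : ℂ) * Complex.I)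
        • (-2 * π * Complex.I * x) ^ i • f x) = _
    rw [harg]
    have hc : (((2 * π : ℝ)⁻¹ : ℝ) : ℂ) * (-2 * π * Complex.I * x) = -(Complex.I * x) := by
      push_cast
      field_simp
    simp only [hfdef, smul_eq_mul, Complex.real_smul, Complex.ofReal_pow]
    rw [show (((2 * π : ℝ)⁻¹ : ℝ) : ℂ) ^ i * (Complex.exp (-Complex.I * ζ * x)
          * ((-2 * π * Complex.I * x) ^ i * (f₀ x : ℂ)))
        = ((((2 * π : ℝ)⁻¹ : ℝ) : ℂ) * (-2 * π * Complex.I * x)) ^ i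
            * ((f₀ x : ℂ) * Complex.exp (-Complex.I * ζ * x)) from by rw [mul_pow]; ring, hc]
  -- the moment cancellation
  set m : ℕ := n - i with hm
  have him : i + m = n := Nat.add_sub_cancel' hi
  have hmomC : ∀ j : ℕ, j < n → ∫ x : ℝ, (x : ℂ) ^ j * (f₀ x : ℂ) = 0 := by
    intro j hj
    have heq : (fun x : ℝ => (x : ℂ) ^ j * (f₀ x : ℂ))
        = fun x : ℝ => ((x ^ j * f₀ x : ℝ) : ℂ) := by
      funext x; push_cast; ring
    have h2 : ∫ x : ℝ, (x : ℂ) ^ j * (f₀ x : ℂ) = ((∫ x : ℝ, x ^ j * f₀ x : ℝ) : ℂ) :=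
      (MeasureTheory.integral_congr_ae (Filter.Eventually.of_forall fun x => by push_cast; rfl)).trans
        (_root_.integral_ofReal (𝕜 := ℂ))
    rw [h2, hmom j hj, Complex.ofReal_zero]
  have hP : ∫ x : ℝ, (-(Complex.I * x)) ^ i * (f₀ x : ℂ)
        * (∑ k ∈ Finset.range m, (-Complex.I * ζ * x) ^ k / (Nat.factorial k)) = 0 := by
    have heq : ∀ x : ℝ, (-(Complex.I * x)) ^ i * (f₀ x : ℂ)
          * (∑ k ∈ Finset.range m, (-Complex.I * ζ * x) ^ k / (Nat.factorial k))
        = ∑ k ∈ Finset.range m, ((-Complex.I) ^ i * ((-Complex.I * ζ) ^ k / (Nat.factorial k)))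
            * ((x : ℂ) ^ (i + k) * (f₀ x : ℂ)) := by
      intro x
      rw [Finset.mul_sum]
      refine Finset.sum_congr rfl fun k _ => ?_
      rw [pow_add]
      ring
    rw [MeasureTheory.integral_congr_ae (Filter.Eventually.of_forall heq)]
    rw [MeasureTheory.integral_finset_sum]
    · refine Finset.sum_eq_zero fun k hk => ?_
      rw [MeasureTheory.integral_const_mul, hmomC (i + k) ?_, mul_zero]
      have hk' : k < m := Finset.mem_range.mp hk
      omega
    · intro k hk
      have hk' : k < m := Finset.mem_range.mp hk
      exact (hIntC (i + k) (by omega)).const_mul _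
  -- integrability of the two pieces
  have hA : Integrable (fun x : ℝ => (-(Complex.I * x)) ^ i
      * ((f₀ x : ℂ) * Complex.exp (-Complex.I * ζ * x))) := by
    refine (habs i hi).mono' ?_ ?_
    · apply AEStronglyMeasurable.mul
      · exact (Continuous.aestronglyMeasurable (by fun_prop))
      · exact hms.mul (Continuous.aestronglyMeasurable (by fun_prop))
    · filter_upwards with x
      simp only [norm_mul, norm_pow, norm_neg]
      rw [Complex.norm_exp]
      simp [Complex.norm_I, Complex.norm_real, Real.norm_eq_abs]
  have hAP : Integrable (fun x : ℝ => (-(Complex.I * x)) ^ i * (f₀ x : ℂ)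
      * (∑ k ∈ Finset.range m, (-Complex.I * ζ * x) ^ k / (Nat.factorial k))) := by
    have heq : ∀ x : ℝ, (-(Complex.I * x)) ^ i * (f₀ x : ℂ)
          * (∑ k ∈ Finset.range m, (-Complex.I * ζ * x) ^ k / (Nat.factorial k))
        = ∑ k ∈ Finset.range m, ((-Complex.I) ^ i * ((-Complex.I * ζ) ^ k / (Nat.factorial k)))
            * ((x : ℂ) ^ (i + k) * (f₀ x : ℂ)) := by
      intro x
      rw [Finset.mul_sum]
      refine Finset.sum_congr rfl fun k _ => ?_
      rw [pow_add]
      ring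
    rw [show (fun x : ℝ => (-(Complex.I * x)) ^ i * (f₀ x : ℂ)
          * (∑ k ∈ Finset.range m, (-Complex.I * ζ * x) ^ k / (Nat.factorial k)))
        = fun x : ℝ => ∑ k ∈ Finset.range m,
            ((-Complex.I) ^ i * ((-Complex.I * ζ) ^ k / (Nat.factorial k)))
            * ((x : ℂ) ^ (i + k) * (f₀ x : ℂ)) from funext heq]
    apply integrable_finset_sum
    intro k hk
    have hk' : k < m := Finset.mem_range.mp hk
    exact (hIntC (i + k) (by omega)).const_mul _
  -- subtract the Taylor polynomial
  have heq2 : (∫ x : ℝ, (-(Complex.I * x)) ^ i * ((f₀ x : ℂ) * Complex.exp (-Complex.I * ζ * x)))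
      = ∫ x : ℝ, (-(Complex.I * x)) ^ i * (f₀ x : ℂ)
          * (Complex.exp (-Complex.I * ζ * x)
            - ∑ k ∈ Finset.range m, (-Complex.I * ζ * x) ^ k / (Nat.factorial k)) := by
    have hptwise : ∀ x : ℝ, (-(Complex.I * x)) ^ i * (f₀ x : ℂ)
          * (Complex.exp (-Complex.I * ζ * x)
            - ∑ k ∈ Finset.range m, (-Complex.I * ζ * x) ^ k / (Nat.factorial k))
        = (-(Complex.I * x)) ^ i * ((f₀ x : ℂ) * Complex.exp (-Complex.I * ζ * x))
          - (-(Complex.I * x)) ^ i * (f₀ x : ℂ)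
            * (∑ k ∈ Finset.range m, (-Complex.I * ζ * x) ^ k / (Nat.factorial k)) := by
      intro x; ring
    rw [MeasureTheory.integral_congr_ae (Filter.Eventually.of_forall hptwise), integral_sub hA hAP, hP, sub_zero]
  -- final estimate
  rw [key, heq2]
  have hbound : ∀ x : ℝ, ‖(-(Complex.I * x)) ^ i * (f₀ x : ℂ)
        * (Complex.exp (-Complex.I * ζ * x)
          - ∑ k ∈ Finset.range m, (-Complex.I * ζ * x) ^ k / (Nat.factorial k))‖
      ≤ |ζ| ^ m * (|x| ^ n * |f₀ x|) := by
    intro x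
    have hrw : (-Complex.I * (ζ : ℂ) * (x : ℂ)) = ((-(ζ * x) : ℝ) : ℂ) * Complex.I := by
      push_cast; ring
    have htay : ‖Complex.exp (-Complex.I * ζ * x)
          - ∑ k ∈ Finset.range m, (-Complex.I * ζ * x) ^ k / (Nat.factorial k)‖
        ≤ |(-(ζ * x) : ℝ)| ^ m / (Nat.factorial m) := by
      rw [hrw]
      exact expTaylor m (-(ζ * x))
    have htay2 : ‖Complex.exp (-Complex.I * ζ * x)
          - ∑ k ∈ Finset.range m, (-Complex.I * ζ * x) ^ k / (Nat.factorial k)‖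
        ≤ |ζ| ^ m * |x| ^ m := by
      refine htay.trans ?_
      rw [abs_neg, abs_mul, mul_pow]
      apply div_le_self (by positivity)
      exact_mod_cast Nat.one_le_iff_ne_zero.mpr m.factorial_ne_zero
    calc ‖(-(Complex.I * x)) ^ i * (f₀ x : ℂ)
          * (Complex.exp (-Complex.I * ζ * x)
            - ∑ k ∈ Finset.range m, (-Complex.I * ζ * x) ^ k / (Nat.factorial k))‖
        = |x| ^ i * |f₀ x| * ‖Complex.exp (-Complex.I * ζ * x)
            - ∑ k ∈ Finset.range m, (-Complex.I * ζ * x) ^ k / (Nat.factorial k)‖ := by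
          rw [norm_mul, norm_mul, norm_pow, norm_neg,
            norm_mul (Complex.I) _]
          simp [Complex.norm_I, Complex.norm_real, Real.norm_eq_abs]
      _ ≤ |x| ^ i * |f₀ x| * (|ζ| ^ m * |x| ^ m) := by
          apply mul_le_mul_of_nonneg_left htay2 (by positivity)
      _ = |ζ| ^ m * (|x| ^ n * |f₀ x|) := by
          rw [← him, pow_add]; ring
  calc ‖∫ x : ℝ, (-(Complex.I * x)) ^ i * (f₀ x : ℂ)
        * (Complex.exp (-Complex.I * ζ * x)
          - ∑ k ∈ Finset.range m, (-Complex.I * ζ * x) ^ k / (Nat.factorial k))‖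
      ≤ ∫ x : ℝ, |ζ| ^ m * (|x| ^ n * |f₀ x|) := by
        refine norm_integral_le_of_norm_le ((habs n le_rfl).const_mul _) ?_
        exact Filter.Eventually.of_forall hbound
    _ = |ζ| ^ m * ∫ x : ℝ, |x| ^ n * |f₀ x| := MeasureTheory.integral_const_mul _ _
    _ = 1 * |ζ| ^ (n - i) * ∫ z : ℝ, |z ^ n * f₀ z| := by
        rw [one_mul, hm]
        congr 1
        refine MeasureTheory.integral_congr_ae (Filter.Eventually.of_forall fun x => ?_)
        show |x| ^ n * |f₀ x| = |x ^ n * f₀ x|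
        rw [_root_.abs_mul, _root_.abs_pow]
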